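/- In the abstract framework, let V_h ⊆ V and Q_h ⊆ Q be linear subspaces, let B : H × H → ℝ be a symmetric positive-semidefinite bilinear form (the discrete form b_h), and assume (exactness of the discrete complex) {v ∈ V_h : D v = 0} = C(Q_h) and (trivial kernel of b_h) that every v ∈ V_h with B(ι v, ι v) = 0 is zero. Then: (i) if (λ,u) ∈ ℝ × V_h with u ≠ 0 and λ ≠ 0 satisfies ⟨D u, D v⟩_W = λ B(ι u, ι v) for all v ∈ V_h, then B(ι u, ι (C q)) = 0 for all q ∈ Q_h, so (λ,u) solves the discrete mixed eigenproblem with multiplier p_h = 0; (ii) conversely, if (λ,u) ∈ ℝ × V_h with u ≠ 0 satisfies, for some p ∈ Q_h, both ⟨D u, D v⟩_W + B(ι v, ι (C p)) = λ B(ι u, ι v) for all v ∈ V_h and B(ι u, ι (C q)) = 0 for all q ∈ Q_h, then λ ≠ 0 and ⟨D u, D v⟩_W = λ B(ι u, ι v) for all v ∈ V_h. -/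

import Mathlib

/-- Abstract form of the paper's proposition on the equivalence of the discrete
variational formulation and the discrete mixed formulation of the eigenproblem. -/
theorem discrete_mixed_equivalence
    {H W V Q : Type*}
    [NormedAddCommGroup H] [InnerProductSpace ℝ H] [CompleteSpace H]
    [NormedAddCommGroup W] [InnerProductSpace ℝ W] [CompleteSpace W]
    [NormedAddCommGroup V] [InnerProductSpace ℝ V] [CompleteSpace V]
    [NormedAddCommGroup Q] [InnerProductSpace ℝ Q] [CompleteSpace Q]
    (ι : V →L[ℝ] H) (D : V →L[ℝ] W) (C : Q →L[ℝ] V)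
    (hnorm : ∀ v : V, ‖v‖ ^ 2 = ‖ι v‖ ^ 2 + ‖D v‖ ^ 2)
    (hDC : ∀ q : Q, D (C q) = 0)
    (Vh : Submodule ℝ V) (Qh : Submodule ℝ Q)
    (B : H →ₗ[ℝ] H →ₗ[ℝ] ℝ)
    (hBsymm : ∀ x y : H, B x y = B y x)
    (hBpos : ∀ x : H, 0 ≤ B x x)
    -- exactness of the discrete complex: {v ∈ V_h : D v = 0} = C(Q_h)
    (hexact : ∀ v : V, (v ∈ Vh ∧ D v = 0) ↔ ∃ q ∈ Qh, C q = v)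
    -- trivial kernel of b_h on V_h
    (hker : ∀ v ∈ Vh, B (ι v) (ι v) = 0 → v = 0) :
    -- (i)
    ((∀ (lam : ℝ) (u : V), u ∈ Vh → u ≠ 0 → lam ≠ 0 →
        (∀ v ∈ Vh, (inner ℝ (D u) (D v) : ℝ) = lam * B (ι u) (ι v)) →
        ∀ q ∈ Qh, B (ι u) (ι (C q)) = 0)
      ∧
    -- (ii)
      (∀ (lam : ℝ) (u : V) (p : Q), u ∈ Vh → p ∈ Qh → u ≠ 0 →
        (∀ v ∈ Vh, (inner ℝ (D u) (D v) : ℝ) + B (ι v) (ι (C p))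
            = lam * B (ι u) (ι v)) →
        (∀ q ∈ Qh, B (ι u) (ι (C q)) = 0) →
        lam ≠ 0 ∧
          ∀ v ∈ Vh, (inner ℝ (D u) (D v) : ℝ) = lam * B (ι u) (ι v))) := by
  have hCq : ∀ q ∈ Qh, C q ∈ Vh := fun q hq =>
    ((hexact (C q)).mpr ⟨q, hq, rfl⟩).1
  constructor
  · intro lam u hu hu0 hlam heq q hq
    have h := heq (C q) (hCq q hq)
    rw [hDC q] at h
    simp at h
    rcases h with h | h
    · exact absurd h hlam
    · exact h
  · intro lam u p hu hp hu0 heq horth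
    have hCp0 : C p = 0 := by
      have h := heq (C p) (hCq p hp)
      rw [hDC p] at h
      simp only [inner_zero_right, zero_add] at h
      rw [horth p hp, mul_zero] at h
      exact hker (C p) (hCq p hp) h
    have heq' : ∀ v ∈ Vh, (inner ℝ (D u) (D v) : ℝ) = lam * B (ι u) (ι v) := by
      intro v hv
      have h := heq v hv
      rw [hCp0] at h
      simpa using h
    have hlam : lam ≠ 0 := by
      intro h0
      have hDu : D u = 0 := by
        have := heq' u hu
        rw [h0, zero_mul] at this
        exact inner_self_eq_zero.mp this
      obtain ⟨q, hq, hqu⟩ := (hexact u).mp ⟨hu, hDu⟩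
      have : B (ι u) (ι u) = 0 := by
        have h2 := horth q hq
        rw [hqu] at h2
        exact h2
      exact hu0 (hker u hu this)
    exact ⟨hlam, heq'⟩
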